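/- arXiv:1910.01893 — 6 statements merged into one kernel-verified Lean document; each statement's English description precedes it below -/
import Mathlib

section
/- For elements x, y of an integral domain R, the matrix with first row (x, y) and second row (0, 0) is a product of idempotent 2×2 matrices if and only if the matrix with first row (y, x) and second row (0, 0) is a product of idempotent 2×2 matrices. -/
def IsIdemProd {R : Type*} [CommRing R] (M : Matrix (Fin 2) (Fin 2) R) : Prop :=
  ∃ l : List (Matrix (Fin 2) (Fin 2) R), (∀ T ∈ l, T * T = T) ∧ M = l.prod

lemma swap_sq {R : Type*} [CommRing R] :
    (!![(0:R),1;1,0]) * (!![(0:R),1;1,0]) = 1 := by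
  ext i j
  fin_cases i <;> fin_cases j <;>
    simp [Matrix.mul_apply, Fin.sum_univ_two, Matrix.one_apply]

lemma swap_swap_mul {R : Type*} [CommRing R] (X : Matrix (Fin 2) (Fin 2) R) :
    (!![(0:R),1;1,0]) * ((!![(0:R),1;1,0]) * X) = X := by
  rw [← mul_assoc, swap_sq, one_mul]

lemma conj_prod {R : Type*} [CommRing R] (l : List (Matrix (Fin 2) (Fin 2) R)) :
    (l.map (fun E => !![(0:R),1;1,0] * E * !![(0:R),1;1,0])).prod
      = !![(0:R),1;1,0] * l.prod * !![(0:R),1;1,0] := by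
  induction l with
  | nil => simp only [List.map_nil, List.prod_nil, mul_one, swap_sq]
  | cons a t ih =>
      rw [List.map_cons, List.prod_cons, ih, List.prod_cons]
      simp only [mul_assoc, swap_swap_mul]

lemma flip_dir {R : Type*} [CommRing R] (x y : R) (h : IsIdemProd !![x, y; 0, 0]) :
    IsIdemProd !![y, x; 0, 0] := by
  obtain ⟨l, hl, hprod⟩ := h
  refine ⟨!![(1:R),1;0,0] :: l.map (fun E => !![(0:R),1;1,0] * E * !![(0:R),1;1,0]), ?_, ?_⟩
  · intro T hT
    rcases List.mem_cons.mp hT with h1 | h2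
    · subst h1
      ext i j
      fin_cases i <;> fin_cases j <;> simp [Matrix.mul_apply, Fin.sum_univ_two]
    · simp only [List.mem_map] at h2
      obtain ⟨E, hE, rfl⟩ := h2
      have hEE := hl E hE
      have key : E * (E * (!![(0:R),1;1,0])) = E * !![(0:R),1;1,0] := by
        rw [← mul_assoc, hEE]
      simp only [mul_assoc, swap_swap_mul, key]
  · rw [List.prod_cons, conj_prod, ← hprod]
    ext i j
    fin_cases i <;> fin_cases j <;>
      simp [Matrix.mul_apply, Fin.sum_univ_two]

theorem stmt_3 {R : Type*} [CommRing R] [IsDomain R] (x y : R) :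
    IsIdemProd !![x, y; 0, 0] ↔ IsIdemProd !![y, x; 0, 0] := by
  exact ⟨flip_dir x y, flip_dir y x⟩
end

section
/- If a 2×2 matrix with first row (x, y) and determinant 1 over an integral domain R can be written as a product of elementary matrices, then x and y admit a weak Euclidean algorithm in R. -/
/-- `x` and `y` admit a weak Euclidean algorithm in `R`. -/
def WeakEuclid {R : Type*} [CommRing R] (x y : R) : Prop :=
  ∃ (n : ℕ) (r q : ℕ → R), r 0 = x ∧ r 1 = y ∧
    (∀ i < n, r i = q i * r (i + 1) + r (i + 2)) ∧ r (n + 1) = 0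

/-- `E` is an elementary 2×2 matrix. -/
def IsElementary {R : Type*} [CommRing R] (E : Matrix (Fin 2) (Fin 2) R) : Prop :=
  ∃ q : R, E = !![1, q; 0, 1] ∨ E = !![1, 0; q, 1]

lemma weakEuclid_of_zero {R : Type*} [CommRing R] (a : R) : WeakEuclid a 0 := by
  refine ⟨0, fun i => if i = 0 then a else 0, fun _ => 0, by simp, by simp, ?_, by simp⟩
  intro i hi; omega

lemma weakEuclid_add_right {R : Type*} [CommRing R] {a b : R} (c : R)
    (h : WeakEuclid a b) : WeakEuclid (a + c * b) b := by
  obtain ⟨n, r, q, h0, h1, hrec, hend⟩ := h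
  refine ⟨n + 2,
    fun k => match k with | 0 => a + c * b | 1 => b | (k+2) => r k,
    fun k => match k with | 0 => c | 1 => 0 | (k+2) => q k,
    rfl, rfl, ?_, hend⟩
  intro i hi
  match i with
  | 0 => simp [h0, h1]; ring
  | 1 => simp [h0, h1]
  | (k+2) => exact hrec k (by omega)

lemma weakEuclid_add_left {R : Type*} [CommRing R] {a b : R} (c : R)
    (h : WeakEuclid a b) : WeakEuclid a (b + c * a) := by
  obtain ⟨n, r, q, h0, h1, hrec, hend⟩ := h
  refine ⟨n + 2,
    fun k => match k with | 0 => a | 1 => b + c * a | (k+2) => r k,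
    fun k => match k with | 0 => 0 | 1 => c | (k+2) => q k,
    rfl, rfl, ?_, hend⟩
  intro i hi
  match i with
  | 0 => simp [h0, h1]
  | 1 => simp [h0, h1]; ring
  | (k+2) => exact hrec k (by omega)

lemma prod_weakEuclid {R : Type*} [CommRing R] (l : List (Matrix (Fin 2) (Fin 2) R))
    (hl : ∀ E ∈ l, IsElementary E) : WeakEuclid (l.prod 0 0) (l.prod 0 1) := by
  induction l using List.reverseRecOn with
  | nil =>
    simpa [Matrix.one_apply] using weakEuclid_of_zero (1 : R)
  | append_singleton l E ih =>
    have hE : IsElementary E := hl E (by simp)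
    have hl' : ∀ F ∈ l, IsElementary F := fun F hF => hl F (by simp [hF])
    have ih' := ih hl'
    rw [List.prod_append, List.prod_singleton]
    obtain ⟨q, hq | hq⟩ := hE <;> subst hq <;>
      simp [Matrix.mul_apply, Fin.sum_univ_two]
    · have := weakEuclid_add_left q ih'
      convert this using 1; ring
    · have := weakEuclid_add_right q ih'
      convert this using 2; ring

theorem stmt_4 {R : Type*} [CommRing R] [IsDomain R] (x y z t : R)
    (M : Matrix (Fin 2) (Fin 2) R) (hM : M = !![x, y; z, t]) (hdet : M.det = 1)
    (hGE : ∃ l : List (Matrix (Fin 2) (Fin 2) R), (∀ E ∈ l, IsElementary E) ∧ M = l.prod) :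
    WeakEuclid x y := by
  obtain ⟨l, hl, hprod⟩ := hGE
  have := prod_weakEuclid l hl
  rw [← hprod, hM] at this
  simpa using this
end

section
/- If two elements x, y of an integral domain R admit a weak Euclidean algorithm, then the 2×2 matrix with first row (x, y) and second row (0, 0) is a product of idempotent matrices over R. -/
/-- Continuant-like sequence built from quotients `Q` (in reversed order). -/
def SqAux {R : Type*} [CommRing R] (Q : ℕ → R) : ℕ → R
  | 0 => 0
  | 1 => 1
  | (k+2) => Q k * SqAux Q (k+1) + SqAux Q k

/-- Casoratian identity between the sequence for `Q` and the one for shifted quotients. -/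
lemma sqAux_cas {R : Type*} [CommRing R] (Q : ℕ → R) (n : ℕ) :
    SqAux Q (n+2) * SqAux (fun k => Q (k+1)) n
      - SqAux Q (n+1) * SqAux (fun k => Q (k+1)) (n+1) = (-1 : R)^(n+1) := by
  induction n with
  | zero => simp [SqAux]
  | succ n ih =>
      have h1 : SqAux Q (n+3) = Q (n+1) * SqAux Q (n+2) + SqAux Q (n+1) := rfl
      have h2 : SqAux (fun k => Q (k+1)) (n+2)
          = Q (n+1) * SqAux (fun k => Q (k+1)) (n+1) + SqAux (fun k => Q (k+1)) n := rfl
      rw [show n+1+2 = n+3 from rfl, h1, h2, pow_succ]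
      linear_combination (-1 : R) * ih

lemma lemA {R : Type*} [CommRing R] :
    ∀ (n : ℕ) (Q : ℕ → R) (d : R),
      IsIdemProd !![d * SqAux Q (n+1), d * SqAux Q n; 0, 0] := by
  intro n
  induction n with
  | zero =>
      intro Q d
      refine ⟨[!![1,0;0,0], !![0,d;0,1], !![1,0;1,0]], ?_, ?_⟩
      · intro T hT
        simp only [List.mem_cons, List.not_mem_nil, or_false] at hT
        rcases hT with rfl | rfl | rfl <;>
          · rw [Matrix.mul_fin_two]; norm_num
      · show _ = _ * (_ * (_ * 1))
        rw [mul_one, Matrix.mul_fin_two, Matrix.mul_fin_two]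
        show !![d * SqAux Q 1, d * SqAux Q 0; 0, 0] = _
        simp [SqAux]
  | succ n ih =>
      intro Q d
      obtain ⟨L, hL, hprod⟩ := ih (fun k => Q (k+1)) d
      set T : ℕ → R := SqAux (fun k => Q (k+1)) with hTdef
      set S : ℕ → R := SqAux Q with hSdef
      have cas : S (n+2) * T n - S (n+1) * T (n+1) = (-1 : R)^(n+1) := sqAux_cas Q n
      set Δ : R := T (n+1) * S (n+1) - T n * S (n+2) with hΔ
      have hΔ2 : Δ * Δ = 1 := by
        have hsq : ((-1 : R)^(n+1)) * ((-1 : R)^(n+1)) = 1 := by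
          rw [← pow_add, show (n+1)+(n+1) = 2*(n+1) by ring, pow_mul]
          norm_num
        calc Δ * Δ = (S (n+2) * T n - S (n+1) * T (n+1)) *
                (S (n+2) * T n - S (n+1) * T (n+1)) := by rw [hΔ]; ring
          _ = 1 := by rw [cas]; exact hsq
      set v1 : R := Δ * (S (n+1) - T n) with hv1
      set v2 : R := Δ * (T (n+1) - S (n+2)) with hv2
      have hTv : T (n+1) * v1 + T n * v2 = 1 := by
        linear_combination T (n+1) * hv1 + T n * hv2 + (-Δ) * hΔ + hΔ2
      have hSv : S (n+2) * v1 + S (n+1) * v2 = 1 := by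
        linear_combination S (n+2) * hv1 + S (n+1) * hv2 + (-Δ) * hΔ + hΔ2
      set E : Matrix (Fin 2) (Fin 2) R :=
        !![v1 * S (n+2), v1 * S (n+1); v2 * S (n+2), v2 * S (n+1)] with hE
      have hEidem : E * E = E := by
        rw [hE, Matrix.mul_fin_two]
        have e00 : v1 * S (n+2) * (v1 * S (n+2)) + v1 * S (n+1) * (v2 * S (n+2))
            = v1 * S (n+2) := by linear_combination (v1 * S (n+2)) * hSv
        have e01 : v1 * S (n+2) * (v1 * S (n+1)) + v1 * S (n+1) * (v2 * S (n+1))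
            = v1 * S (n+1) := by linear_combination (v1 * S (n+1)) * hSv
        have e10 : v2 * S (n+2) * (v1 * S (n+2)) + v2 * S (n+1) * (v2 * S (n+2))
            = v2 * S (n+2) := by linear_combination (v2 * S (n+2)) * hSv
        have e11 : v2 * S (n+2) * (v1 * S (n+1)) + v2 * S (n+1) * (v2 * S (n+1))
            = v2 * S (n+1) := by linear_combination (v2 * S (n+1)) * hSv
        rw [e00, e01, e10, e11]
      refine ⟨L ++ [E], ?_, ?_⟩
      · intro M hM
        rcases List.mem_append.mp hM with hM | hM
        · exact hL M hM
        · rw [List.mem_singleton] at hM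
          rw [hM]; exact hEidem
      · rw [List.prod_append, List.prod_singleton, ← hprod]
        show !![d * S (n+1+1), d * S (n+1); 0, 0] = _
        rw [hE, Matrix.mul_fin_two]
        have e00 : d * T (n+1) * (v1 * S (n+2)) + d * T n * (v2 * S (n+2))
            = d * S (n+2) := by linear_combination (d * S (n+2)) * hTv
        have e01 : d * T (n+1) * (v1 * S (n+1)) + d * T n * (v2 * S (n+1))
            = d * S (n+1) := by linear_combination (d * S (n+1)) * hTv
        rw [e00, e01]
        norm_num

theorem stmt_5 {R : Type*} [CommRing R] [IsDomain R] (x y : R)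
    (h : WeakEuclid x y) : IsIdemProd !![x, y; 0, 0] := by
  obtain ⟨n, r, q, hx, hy, hrec, hend⟩ := h
  set Q : ℕ → R := fun k => q (n - 1 - k) with hQ
  have key : ∀ j : ℕ, (j ≤ n + 1 → r (n + 1 - j) = r n * SqAux Q j) ∧
      (j + 1 ≤ n + 1 → r (n + 1 - (j+1)) = r n * SqAux Q (j+1)) := by
    intro j
    induction j with
    | zero =>
        constructor
        · intro _
          simp only [Nat.sub_zero]
          rw [hend, show SqAux Q 0 = 0 from rfl, mul_zero]
        · intro _
          rw [show n + 1 - (0+1) = n by omega, show SqAux Q (0+1) = 1 from rfl, mul_one]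
    | succ j ih =>
        refine ⟨ih.2, ?_⟩
        intro hj2
        have hi : n + 1 - (j + 1 + 1) = n - 1 - j := by omega
        have hi1 : n - 1 - j + 1 = n + 1 - (j+1) := by omega
        have hi2 : n - 1 - j + 2 = n + 1 - j := by omega
        have hrel := hrec (n - 1 - j) (by omega)
        rw [hi, hrel, hi1, hi2, ih.1 (by omega), ih.2 (by omega),
          show q (n - 1 - j) = Q j from rfl,
          show SqAux Q (j+1+1) = Q j * SqAux Q (j+1) + SqAux Q j from rfl]
        ring
  have hx' : x = r n * SqAux Q (n+1) := by
    have h0 := (key (n+1)).1 le_rfl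
    rw [Nat.sub_self] at h0
    rw [← hx]; exact h0
  have hy' : y = r n * SqAux Q n := by
    have h0 := (key n).1 (by omega)
    rw [show n + 1 - n = 1 by omega] at h0
    rw [← hy]; exact h0
  rw [hx', hy']
  exact lemA n Q (r n)
end

section
/- Over any integral domain R, if M is a singular 2×2 matrix whose first-row entries generate a principal ideal of R, then M is a column-row matrix, i.e., M = (x, y)^T (a, b) for some a, b, x, y in R. -/
theorem stmt_11 {R : Type*} [CommRing R] [IsDomain R]
    (M : Matrix (Fin 2) (Fin 2) R) (hsing : M.det = 0)
    (hprinc : (Ideal.span {M 0 0, M 0 1}).IsPrincipal) :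
    ∃ a b x y : R, M = !![x * a, x * b; y * a, y * b] := by
  obtain ⟨g, hg⟩ := hprinc
  rcases eq_or_ne g 0 with h0 | h0
  · have h00 : M 0 0 = 0 := by
      have h : M 0 0 ∈ Ideal.span {M 0 0, M 0 1} := Ideal.subset_span (by simp)
      rw [hg, h0] at h
      exact zero_dvd_iff.mp (Ideal.mem_span_singleton.mp h)
    have h01 : M 0 1 = 0 := by
      have h : M 0 1 ∈ Ideal.span {M 0 0, M 0 1} := Ideal.subset_span (by simp)
      rw [hg, h0] at h
      exact zero_dvd_iff.mp (Ideal.mem_span_singleton.mp h)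
    refine ⟨M 1 0, M 1 1, 0, 1, ?_⟩
    rw [Matrix.eta_fin_two M, h00, h01]
    norm_num
  · have hmem0 : M 0 0 ∈ Ideal.span {g} := by
      show M 0 0 ∈ Submodule.span R {g}
      rw [← hg]; exact Ideal.subset_span (by simp)
    have hmem1 : M 0 1 ∈ Ideal.span {g} := by
      show M 0 1 ∈ Submodule.span R {g}
      rw [← hg]; exact Ideal.subset_span (by simp)
    obtain ⟨u, hu⟩ := Ideal.mem_span_singleton'.mp hmem0
    obtain ⟨v, hv⟩ := Ideal.mem_span_singleton'.mp hmem1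
    have hgmem : g ∈ Ideal.span {M 0 0, M 0 1} := by
      rw [hg]; exact Ideal.subset_span (by simp)
    obtain ⟨s, t, hst⟩ := Ideal.mem_span_pair.mp hgmem
    have hdet : M 0 0 * M 1 1 - M 0 1 * M 1 0 = 0 := by
      rw [← Matrix.det_fin_two]; exact hsing
    have hdet' : M 0 0 * M 1 1 = M 0 1 * M 1 0 := sub_eq_zero.mp hdet
    have hone : s * u + t * v = 1 := by
      have h : g * (s * u + t * v) = g * 1 := by
        linear_combination s * hu + t * hv + hst
      exact mul_left_cancel₀ h0 h
    have huv : u * M 1 1 = v * M 1 0 := by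
      have h : g * (u * M 1 1) = g * (v * M 1 0) := by
        linear_combination M 1 1 * hu - M 1 0 * hv + hdet'
      exact mul_left_cancel₀ h0 h
    refine ⟨u, v, g, s * M 1 0 + t * M 1 1, ?_⟩
    ext i j
    fin_cases i <;> fin_cases j
    · show M 0 0 = g * u
      linear_combination -hu
    · show M 0 1 = g * v
      linear_combination -hv
    · show M 1 0 = (s * M 1 0 + t * M 1 1) * u
      linear_combination (-(M 1 0)) * hone - t * huv
    · show M 1 1 = (s * M 1 0 + t * M 1 1) * v
      linear_combination (-(M 1 1)) * hone + s * huv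
end

section
/- Let D be a real quadratic integer ring, p a prime integer that is irreducible but not prime in D, and z an element of D such that the ideal (p, z) of D is not principal and p divides the norm z·z̄ in Z. Then the singular matrix with rows (p, z) and (z̄, N(z)/p) is not a column-row matrix over D. -/
theorem stmt_12 (d : ℤ) (hd : Squarefree d) (hd1 : 1 < d)
    (p : ℤ) (hp : Prime p)
    (hirr : Irreducible (p : ℤ√d)) (hnp : ¬ Prime (p : ℤ√d))
    (z : ℤ√d) (hprinc : ¬ (Ideal.span {(p : ℤ√d), z}).IsPrincipal)
    (hdvd : p ∣ z.norm) :
    ¬ ∃ a b x y : ℤ√d,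
      !![(p : ℤ√d), z; star z, ((z.norm / p : ℤ) : ℤ√d)] =
        !![x * a, x * b; y * a, y * b] := by
  rintro ⟨a, b, x, y, h⟩
  have e00 : (p : ℤ√d) = x * a := by
    have := congrArg (fun M => M 0 0) h; simpa [starRingEnd_apply] using this
  have e01 : z = x * b := by
    have := congrArg (fun M => M 0 1) h; simpa [starRingEnd_apply] using this
  have e10 : star z = y * a := by
    have := congrArg (fun M => M 1 0) h; simpa [starRingEnd_apply] using this
  -- In either case, p divides z, so the ideal (p, z) = (p) is principal.
  have hpz : (p : ℤ√d) ∣ z := by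
    rcases hirr.isUnit_or_isUnit e00 with hx | ha
    · -- x unit: a = x⁻¹ * p, so p ∣ star z, hence p ∣ z
      obtain ⟨u, rfl⟩ := hx
      have hdz : (p : ℤ√d) ∣ star z := by
        refine ⟨y * ↑u⁻¹, ?_⟩
        have : a = ↑u⁻¹ * (p : ℤ√d) := by
          rw [e00]; rw [← mul_assoc]; simp
        rw [e10, this]; ring
      have := map_dvd (starRingEnd (ℤ√d)) hdz
      simpa [starRingEnd_apply] using this
    · obtain ⟨u, rfl⟩ := ha
      refine ⟨↑u⁻¹ * b, ?_⟩
      have hx : x = (p : ℤ√d) * ↑u⁻¹ := by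
        rw [e00]; rw [mul_assoc]; simp
      rw [e01, hx]; ring
  apply hprinc
  have : (Ideal.span {(p : ℤ√d), z}) = Ideal.span {(p : ℤ√d)} := by
    rw [Ideal.span_insert]
    refine sup_eq_left.mpr ?_
    rw [Ideal.span_singleton_le_span_singleton]
    exact hpz
  rw [this]
  exact ⟨⟨(p : ℤ√d), rfl⟩⟩
end

section
/- Let R be an integral domain and x, y nonzero elements of R with a common factor z (x = z x', y = z y'). If the matrix with first row (x', y') and second row (0, 0) is a product of idempotent 2×2 matrices over R, then so is the matrix with first row (x, y) and second row (0, 0). -/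
theorem stmt_19 {R : Type*} [CommRing R] [IsDomain R] (x y z x' y' : R)
    (hx : x ≠ 0) (hy : y ≠ 0) (hxz : x = z * x') (hyz : y = z * y')
    (h : IsIdemProd !![x', y'; 0, 0]) : IsIdemProd !![x, y; 0, 0] := by
  obtain ⟨l, hl, hprod⟩ := h
  refine ⟨!![1, 1; 0, 0] :: !![1, 0; z - 1, 0] :: l, ?_, ?_⟩
  · intro T hT
    simp only [List.mem_cons] at hT
    rcases hT with h1 | h2 | hmem
    · subst h1; ext i j; fin_cases i <;> fin_cases j <;>
        simp [Matrix.mul_apply, Fin.sum_univ_succ]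
    · subst h2; ext i j; fin_cases i <;> fin_cases j <;>
        simp [Matrix.mul_apply, Fin.sum_univ_succ]
    · exact hl T hmem
  · have : (!![1, 1; 0, 0] : Matrix (Fin 2) (Fin 2) R) * !![1, 0; z - 1, 0] *
        !![x', y'; 0, 0] = !![x, y; 0, 0] := by
      ext i j; fin_cases i <;> fin_cases j <;>
        simp [Matrix.mul_apply, Fin.sum_univ_succ, hxz, hyz] <;> ring
    simp only [List.prod_cons, ← hprod, ← mul_assoc, this]
end
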